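/- Let J be any coupling of probability measures P₀ and P₁ on ℝ, each with finite second moment, with quantile functions F₀⁻¹, F₁⁻¹. Then ∫ y₀ y₁ dJ(y₀, y₁) ≥ ∫₀¹ F₀⁻¹(1 − u) F₁⁻¹(u) du, and equality holds when J is the antitone coupling, i.e. the pushforward of Lebesgue measure on (0,1) under u ↦ (F₀⁻¹(1 − u), F₁⁻¹(u)). -/

import Mathlib

open MeasureTheory Set Filter

/-- The cumulative distribution function of a measure on ℝ. -/
noncomputable def cdf (P : MeasureTheory.Measure ℝ) (y : ℝ) : ℝ := (P (Set.Iic y)).toReal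

/-- The quantile function (generalized inverse cdf) of a measure on ℝ. -/
noncomputable def quantile (P : MeasureTheory.Measure ℝ) (u : ℝ) : ℝ :=
  sInf {y : ℝ | u ≤ cdf P y}

open scoped Topology ENNReal

section Aux

variable {P : Measure ℝ} [IsProbabilityMeasure P]

lemma cdf_eq_pcdf (P : Measure ℝ) [IsProbabilityMeasure P] :
    cdf P = ⇑(ProbabilityTheory.cdf P) :=
  funext fun y => (ProbabilityTheory.cdf_eq_real P y).symm

lemma cdf_mono : Monotone (cdf P) := by
  rw [cdf_eq_pcdf]; exact ProbabilityTheory.monotone_cdf P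

lemma qset_nonempty {u : ℝ} (hu : u < 1) : {y : ℝ | u ≤ cdf P y}.Nonempty := by
  have h : ∀ᶠ y in atTop, u ≤ cdf P y := by
    rw [cdf_eq_pcdf]
    exact (ProbabilityTheory.tendsto_cdf_atTop P).eventually (eventually_ge_nhds hu)
  exact h.exists

lemma qset_bddBelow {u : ℝ} (hu : 0 < u) : BddBelow {y : ℝ | u ≤ cdf P y} := by
  have h : ∀ᶠ y in atBot, cdf P y < u := by
    rw [cdf_eq_pcdf]
    exact (ProbabilityTheory.tendsto_cdf_atBot P).eventually (eventually_lt_nhds hu)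
  obtain ⟨b, hb⟩ := eventually_atBot.1 h
  exact ⟨b, fun y hy => le_of_not_gt fun hby =>
    absurd hy (not_le.2 (hb y hby.le))⟩

lemma quantile_le_iff {u : ℝ} (hu0 : 0 < u) (hu1 : u < 1) {y : ℝ} :
    quantile P u ≤ y ↔ u ≤ cdf P y := by
  constructor
  · intro h
    have hz : ∀ z, y < z → u ≤ cdf P z := by
      intro z hz
      obtain ⟨w, hw, hwz⟩ := exists_lt_of_csInf_lt (qset_nonempty hu1) (lt_of_le_of_lt h hz)
      exact hw.trans (cdf_mono hwz.le)
    have htd : Tendsto (cdf P) (𝓝[>] y) (𝓝 (cdf P y)) := by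
      rw [cdf_eq_pcdf]
      exact ((ProbabilityTheory.cdf P).right_continuous y).mono_left
        (nhdsWithin_mono y Ioi_subset_Ici_self)
    exact ge_of_tendsto htd (eventually_mem_nhdsWithin.mono fun z hzz => hz z hzz)
  · intro h
    exact csInf_le (qset_bddBelow hu0) h

lemma quantile_monotoneOn : MonotoneOn (quantile P) (Set.Ioo 0 1) := by
  intro u hu v hv huv
  exact csInf_le_csInf (qset_bddBelow hu.1) (qset_nonempty hv.2)
    (fun y hy => le_trans huv hy)

lemma le_quantile_of_lt {v s : ℝ} (hv : v ∈ Set.Ioo (0:ℝ) 1)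
    (h : (P (Set.Iio s)).toReal < v) : s ≤ quantile P v := by
  refine le_csInf (qset_nonempty hv.2) fun y hy => ?_
  by_contra hys
  push_neg at hys
  have : cdf P y ≤ (P (Set.Iio s)).toReal :=
    ENNReal.toReal_mono (measure_ne_top _ _) (measure_mono (Set.Iic_subset_Iio.2 hys))
  have : cdf P y < v := lt_of_le_of_lt this h
  exact absurd hy (not_le.2 this)

lemma quantile_lt_of_lt {v s : ℝ} (hv : v ∈ Set.Ioo (0:ℝ) 1)
    (h : v < (P (Set.Iio s)).toReal) : quantile P v < s := by
  have hmono : Monotone (fun n : ℕ => Set.Iic (s - 1 / (n + 1))) := by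
    intro n m hnm
    apply Set.Iic_subset_Iic.2
    have : (1:ℝ) / (m + 1) ≤ 1 / (n + 1) := by
      apply one_div_le_one_div_of_le (by positivity)
      exact_mod_cast add_le_add_left (Nat.cast_le.2 hnm) 1
    linarith
  have hunion : ⋃ n : ℕ, Set.Iic (s - 1 / (n + 1)) = Set.Iio s := by
    ext x
    simp only [Set.mem_iUnion, Set.mem_Iic, Set.mem_Iio]
    constructor
    · rintro ⟨n, hn⟩
      have : (0:ℝ) < 1 / (n + 1) := by positivity
      linarith
    · intro hx
      obtain ⟨n, hn⟩ := exists_nat_one_div_lt (sub_pos.2 hx)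
      exact ⟨n, by linarith⟩
  have htd : Tendsto (fun n : ℕ => P (Set.Iic (s - 1 / (n + 1)))) atTop (𝓝 (P (Set.Iio s))) := by
    have := tendsto_measure_iUnion_atTop (μ := P) hmono
    rwa [hunion] at this
  have htd' : Tendsto (fun n : ℕ => (P (Set.Iic (s - 1 / (n + 1)))).toReal) atTop
      (𝓝 ((P (Set.Iio s)).toReal)) :=
    (ENNReal.tendsto_toReal (measure_ne_top _ _)).comp htd
  obtain ⟨n, hn⟩ := (htd'.eventually (eventually_gt_nhds h)).exists
  have hq : quantile P v ≤ s - 1 / (n + 1) :=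
    csInf_le (qset_bddBelow hv.1) (le_of_lt hn)
  have : (0:ℝ) < 1 / (n + 1) := by positivity
  linarith

lemma toReal_Iio_le_of_le_quantile {v s : ℝ} (hv : v ∈ Set.Ioo (0:ℝ) 1)
    (h : s ≤ quantile P v) : (P (Set.Iio s)).toReal ≤ v := by
  by_contra hc
  push_neg at hc
  exact absurd h (not_le.2 (quantile_lt_of_lt hv hc))

lemma Iio_toReal_add_Ici_toReal (s : ℝ) :
    (P (Set.Iio s)).toReal + (P (Set.Ici s)).toReal = 1 := by
  have h : P (Set.Iio s) + P (Set.Ici s) = 1 := by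
    rw [← measure_union (Set.Iio_disjoint_Ici le_rfl) measurableSet_Ici,
      Set.Iio_union_Ici, measure_univ]
  rw [← ENNReal.toReal_add (measure_ne_top P _) (measure_ne_top P _), h, ENNReal.toReal_one]

instance : IsProbabilityMeasure (volume.restrict (Set.Ioo (0:ℝ) 1)) :=
  ⟨by simp⟩

lemma quantile_aemeasurable :
    AEMeasurable (quantile P) (volume.restrict (Set.Ioo (0:ℝ) 1)) :=
  aemeasurable_restrict_of_monotoneOn measurableSet_Ioo quantile_monotoneOn

lemma map_quantile :
    (volume.restrict (Set.Ioo (0:ℝ) 1)).map (quantile P) = P := by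
  haveI : IsProbabilityMeasure ((volume.restrict (Set.Ioo (0:ℝ) 1)).map (quantile P)) :=
    Measure.isProbabilityMeasure_map quantile_aemeasurable
  refine Measure.ext_of_Iic _ _ fun a => ?_
  rw [Measure.map_apply_of_aemeasurable quantile_aemeasurable measurableSet_Iic,
    Measure.restrict_apply' measurableSet_Ioo]
  have hset : quantile P ⁻¹' Set.Iic a ∩ Set.Ioo 0 1 = Set.Ioo 0 1 ∩ Set.Iic (cdf P a) := by
    ext u
    simp only [Set.mem_inter_iff, Set.mem_preimage, Set.mem_Iic, Set.mem_Ioo]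
    constructor
    · rintro ⟨h1, h2⟩
      exact ⟨h2, (quantile_le_iff h2.1 h2.2).1 h1⟩
    · rintro ⟨h2, h1⟩
      exact ⟨(quantile_le_iff h2.1 h2.2).2 h1, h2⟩
  rw [hset]
  have hc0 : 0 ≤ cdf P a := ENNReal.toReal_nonneg
  have hc1 : cdf P a ≤ 1 := by
    rw [cdf_eq_pcdf]; exact ProbabilityTheory.cdf_le_one P a
  have hofReal : ENNReal.ofReal (cdf P a) = P (Set.Iic a) :=
    ENNReal.ofReal_toReal (measure_ne_top _ _)
  rcases lt_or_ge (cdf P a) 1 with hlt | hge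
  · have : Set.Ioo (0:ℝ) 1 ∩ Set.Iic (cdf P a) = Set.Ioc 0 (cdf P a) := by
      ext u
      simp only [Set.mem_inter_iff, Set.mem_Ioo, Set.mem_Iic, Set.mem_Ioc]
      constructor
      · rintro ⟨⟨h1, h2⟩, h3⟩; exact ⟨h1, h3⟩
      · rintro ⟨h1, h3⟩; exact ⟨⟨h1, lt_of_le_of_lt h3 hlt⟩, h3⟩
    rw [this, Real.volume_Ioc, sub_zero, hofReal]
  · have hc : cdf P a = 1 := le_antisymm hc1 hge
    have hs2 : Set.Ioo (0:ℝ) 1 ∩ Set.Iic (cdf P a) = Set.Ioo 0 1 := by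
      rw [hc]
      exact Set.inter_eq_left.2 fun u hu => le_of_lt hu.2
    rw [hs2, Real.volume_Ioo, ← hofReal, hc]
    norm_num

lemma map_one_sub :
    (volume.restrict (Set.Ioo (0:ℝ) 1)).map (fun u => 1 - u) = volume.restrict (Set.Ioo (0:ℝ) 1) := by
  have hmp : MeasurePreserving (fun u : ℝ => 1 - u) volume volume :=
    Measure.measurePreserving_sub_left volume 1
  have hpre : (fun u : ℝ => 1 - u) ⁻¹' (Set.Ioo 0 1) = Set.Ioo 0 1 := by
    ext u
    simp only [Set.mem_preimage, Set.mem_Ioo]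
    constructor <;> rintro ⟨h1, h2⟩ <;> constructor <;> linarith
  have h2 := (hmp.restrict_preimage (s := Set.Ioo (0:ℝ) 1) measurableSet_Ioo).map_eq
  rwa [hpre] at h2

lemma one_sub_aemeasurable_quantile :
    AEMeasurable (fun u => quantile P (1 - u)) (volume.restrict (Set.Ioo (0:ℝ) 1)) := by
  refine aemeasurable_restrict_of_antitoneOn measurableSet_Ioo ?_
  intro u hu v hv huv
  have hu' : 1 - u ∈ Set.Ioo (0:ℝ) 1 := ⟨by linarith [hu.2], by linarith [hu.1]⟩
  have hv' : 1 - v ∈ Set.Ioo (0:ℝ) 1 := ⟨by linarith [hv.2], by linarith [hv.1]⟩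
  exact quantile_monotoneOn hv' hu' (by linarith)

lemma map_quantile_one_sub :
    (volume.restrict (Set.Ioo (0:ℝ) 1)).map (fun u => quantile P (1 - u)) = P := by
  have h1 : AEMeasurable (quantile P)
      ((volume.restrict (Set.Ioo (0:ℝ) 1)).map (fun u : ℝ => 1 - u)) := by
    rw [map_one_sub]; exact quantile_aemeasurable
  have h2 : AEMeasurable (fun u : ℝ => 1 - u) (volume.restrict (Set.Ioo (0:ℝ) 1)) :=
    (measurable_const.sub measurable_id).aemeasurable
  have := AEMeasurable.map_map_of_aemeasurable h1 h2
  rw [map_one_sub, map_quantile] at this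
  exact this.symm

end Aux

section KK

/-- The Hoeffding kernel: `kk x s = 1_{0 < s ≤ x} - 1_{x < s ≤ 0}`. -/
noncomputable def kk (x s : ℝ) : ℝ :=
  (Set.Ioc 0 x).indicator 1 s - (Set.Ioc x 0).indicator 1 s

lemma kk_eq (x s : ℝ) :
    kk x s = (Set.Ici s).indicator 1 x - (Set.Iic (0:ℝ)).indicator 1 s := by
  simp only [kk, Set.indicator_apply, Set.mem_Ioc, Set.mem_Ici, Set.mem_Iic, Pi.one_apply]
  rcases le_or_gt s x with h1 | h1 <;> rcases le_or_gt s 0 with h2 | h2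
  · rw [if_neg (fun h => absurd h.1 (not_lt.2 h2)), if_neg (fun h => absurd h.1 (not_lt.2 h1)),
      if_pos h1, if_pos h2]
    norm_num
  · rw [if_pos ⟨h2, h1⟩, if_neg (fun h => absurd h.1 (not_lt.2 h1)), if_pos h1,
      if_neg (not_le.2 h2)]
  · rw [if_neg (fun h => absurd h.1 (not_lt.2 h2)), if_pos ⟨h1, h2⟩, if_neg (not_le.2 h1),
      if_pos h2]
  · rw [if_neg (fun h => absurd h.2 (not_le.2 h1)), if_neg (fun h => absurd h.2 (not_le.2 h2)),
      if_neg (not_le.2 h1), if_neg (not_le.2 h2)]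

lemma indicator_Ioc_integrable (a b : ℝ) :
    Integrable ((Set.Ioc a b).indicator (1 : ℝ → ℝ)) volume := by
  rw [integrable_indicator_iff measurableSet_Ioc]
  exact integrableOn_const (by rw [Real.volume_Ioc]; exact ENNReal.ofReal_ne_top)

lemma kk_measurable : Measurable (fun q : ℝ × ℝ => kk q.1 q.2) := by
  have h1 : MeasurableSet {q : ℝ × ℝ | q.2 ∈ Set.Ioc 0 q.1} := by
    exact (measurableSet_lt measurable_const measurable_snd).inter
      (measurableSet_le measurable_snd measurable_fst)
  have h2 : MeasurableSet {q : ℝ × ℝ | q.2 ∈ Set.Ioc q.1 0} := by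
    exact (measurableSet_lt measurable_fst measurable_snd).inter
      (measurableSet_le measurable_snd measurable_const)
  have : (fun q : ℝ × ℝ => kk q.1 q.2) =
      fun q => {q : ℝ × ℝ | q.2 ∈ Set.Ioc 0 q.1}.indicator 1 q -
        {q : ℝ × ℝ | q.2 ∈ Set.Ioc q.1 0}.indicator 1 q := by
    funext q
    simp only [kk, Set.indicator_apply, Set.mem_setOf_eq]
    split_ifs <;> rfl
  rw [this]
  exact ((measurable_const.indicator h1).sub (measurable_const.indicator h2))

lemma kk_integrable (x : ℝ) : Integrable (kk x) volume := by
  unfold kk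
  exact (indicator_Ioc_integrable 0 x).sub (indicator_Ioc_integrable x 0)

lemma kk_integral (x : ℝ) : ∫ s, kk x s = x := by
  unfold kk
  rw [integral_sub (indicator_Ioc_integrable 0 x) (indicator_Ioc_integrable x 0),
    integral_indicator_one measurableSet_Ioc, integral_indicator_one measurableSet_Ioc,
    Real.volume_real_Ioc, Real.volume_real_Ioc]
  rcases le_or_gt 0 x with h | h
  · rw [max_eq_left (by linarith : (0:ℝ) ≤ x - 0), max_eq_right (by linarith : (0:ℝ) - x ≤ 0)]
    simp
  · rw [max_eq_right (by linarith : x - 0 ≤ (0:ℝ)), max_eq_left (by linarith : (0:ℝ) ≤ 0 - x)]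
    simp

lemma kk_abs (x s : ℝ) :
    |kk x s| = (Set.Ioc 0 x).indicator 1 s + (Set.Ioc x 0).indicator 1 s := by
  rcases le_or_gt 0 x with h | h
  · rw [Set.Ioc_eq_empty (not_lt.2 h)]
    simp only [kk, Set.Ioc_eq_empty (not_lt.2 h), Set.indicator_empty, Pi.zero_apply, sub_zero,
      add_zero]
    exact abs_of_nonneg (Set.indicator_nonneg (fun _ _ => zero_le_one) s)
  · rw [Set.Ioc_eq_empty (not_lt.2 h.le)]
    simp only [kk, Set.Ioc_eq_empty (not_lt.2 h.le), Set.indicator_empty, Pi.zero_apply, zero_sub,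
      zero_add, abs_neg]
    exact abs_of_nonneg (Set.indicator_nonneg (fun _ _ => zero_le_one) s)

lemma kk_abs_integral (x : ℝ) : ∫ s, |kk x s| = |x| := by
  simp only [kk_abs]
  rw [integral_add (indicator_Ioc_integrable 0 x) (indicator_Ioc_integrable x 0),
    integral_indicator_one measurableSet_Ioc, integral_indicator_one measurableSet_Ioc,
    Real.volume_real_Ioc, Real.volume_real_Ioc]
  rcases le_or_gt 0 x with h | h
  · rw [max_eq_left (by linarith : (0:ℝ) ≤ x - 0), max_eq_right (by linarith : (0:ℝ) - x ≤ 0),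
      abs_of_nonneg h]
    simp
  · rw [max_eq_right (by linarith : x - 0 ≤ (0:ℝ)), max_eq_left (by linarith : (0:ℝ) ≤ 0 - x),
      abs_of_neg h]
    simp

end KK


section Main

lemma map_fst_prod_apply (μ : Measure (ℝ × ℝ)) [IsProbabilityMeasure μ] (s : ℝ) :
    μ (Set.Ici s ×ˢ (Set.univ : Set ℝ)) = μ.map Prod.fst (Set.Ici s) := by
  rw [Measure.map_apply measurable_fst measurableSet_Ici, ← Set.prod_univ]

lemma map_snd_prod_apply (μ : Measure (ℝ × ℝ)) [IsProbabilityMeasure μ] (t : ℝ) :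
    μ ((Set.univ : Set ℝ) ×ˢ Set.Ici t) = μ.map Prod.snd (Set.Ici t) := by
  rw [Measure.map_apply measurable_snd measurableSet_Ici, ← Set.univ_prod]

lemma g_formula (μ : Measure (ℝ × ℝ)) [IsProbabilityMeasure μ] (s t : ℝ) :
    ∫ p : ℝ × ℝ, kk p.1 s * kk p.2 t ∂μ
      = (μ (Set.Ici s ×ˢ Set.Ici t)).toReal
        - (Set.Iic (0:ℝ)).indicator 1 t * (μ.map Prod.fst (Set.Ici s)).toReal
        - (Set.Iic (0:ℝ)).indicator 1 s * (μ.map Prod.snd (Set.Ici t)).toReal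
        + (Set.Iic (0:ℝ)).indicator 1 s * (Set.Iic (0:ℝ)).indicator 1 t := by
  have hA : ∀ p : ℝ × ℝ, (Set.Ici s).indicator (1 : ℝ → ℝ) p.1
      * (Set.Ici t).indicator (1 : ℝ → ℝ) p.2
      = (Set.Ici s ×ˢ Set.Ici t).indicator (1 : ℝ × ℝ → ℝ) p := by
    intro p
    by_cases h1 : p.1 ∈ Set.Ici s <;> by_cases h2 : p.2 ∈ Set.Ici t <;>
      simp_all [Set.indicator_apply, Set.mem_prod, Set.mem_Ici, Prod.le_def]
  have hA1 : ∀ p : ℝ × ℝ, (Set.Ici s).indicator (1 : ℝ → ℝ) p.1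
      = (Set.Ici s ×ˢ (Set.univ : Set ℝ)).indicator (1 : ℝ × ℝ → ℝ) p := by
    intro p
    by_cases h1 : p.1 ∈ Set.Ici s <;>
      simp_all [Set.indicator_apply, Set.mem_prod, Set.mem_Ici, Prod.le_def]
  have hA2 : ∀ p : ℝ × ℝ, (Set.Ici t).indicator (1 : ℝ → ℝ) p.2
      = ((Set.univ : Set ℝ) ×ˢ Set.Ici t).indicator (1 : ℝ × ℝ → ℝ) p := by
    intro p
    by_cases h2 : p.2 ∈ Set.Ici t <;>
      simp_all [Set.indicator_apply, Set.mem_prod, Set.mem_Ici, Prod.le_def]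
  have hexp : ∀ p : ℝ × ℝ, kk p.1 s * kk p.2 t
      = (Set.Ici s ×ˢ Set.Ici t).indicator (1 : ℝ × ℝ → ℝ) p
        - (Set.Iic (0:ℝ)).indicator 1 t * (Set.Ici s ×ˢ (Set.univ : Set ℝ)).indicator (1 : ℝ × ℝ → ℝ) p
        - (Set.Iic (0:ℝ)).indicator 1 s * ((Set.univ : Set ℝ) ×ˢ Set.Ici t).indicator (1 : ℝ × ℝ → ℝ) p
        + (Set.Iic (0:ℝ)).indicator 1 s * (Set.Iic (0:ℝ)).indicator 1 t := by
    intro p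
    rw [kk_eq, kk_eq, ← hA p, ← hA1 p, ← hA2 p]
    ring
  have hiA : Integrable ((Set.Ici s ×ˢ Set.Ici t).indicator (1 : ℝ × ℝ → ℝ)) μ :=
    (integrable_const 1).indicator (measurableSet_Ici.prod measurableSet_Ici)
  have hiA1 : Integrable ((Set.Ici s ×ˢ (Set.univ : Set ℝ)).indicator (1 : ℝ × ℝ → ℝ)) μ :=
    (integrable_const 1).indicator (measurableSet_Ici.prod MeasurableSet.univ)
  have hiA2 : Integrable (((Set.univ : Set ℝ) ×ˢ Set.Ici t).indicator (1 : ℝ × ℝ → ℝ)) μ :=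
    (integrable_const 1).indicator (MeasurableSet.univ.prod measurableSet_Ici)
  have hI1 : Integrable (fun p : ℝ × ℝ =>
      (Set.Ici s ×ˢ Set.Ici t).indicator (1 : ℝ × ℝ → ℝ) p
        - (Set.Iic (0:ℝ)).indicator 1 t * (Set.Ici s ×ˢ (Set.univ : Set ℝ)).indicator (1 : ℝ × ℝ → ℝ) p) μ :=
    hiA.sub (hiA1.const_mul _)
  have hI2 : Integrable (fun p : ℝ × ℝ =>
      (Set.Ici s ×ˢ Set.Ici t).indicator (1 : ℝ × ℝ → ℝ) p
        - (Set.Iic (0:ℝ)).indicator 1 t * (Set.Ici s ×ˢ (Set.univ : Set ℝ)).indicator (1 : ℝ × ℝ → ℝ) p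
        - (Set.Iic (0:ℝ)).indicator 1 s * ((Set.univ : Set ℝ) ×ˢ Set.Ici t).indicator (1 : ℝ × ℝ → ℝ) p) μ :=
    hI1.sub (hiA2.const_mul _)
  simp only [hexp]
  rw [integral_add hI2 (integrable_const _),
    integral_sub hI1 (hiA2.const_mul _),
    integral_sub hiA (hiA1.const_mul _), integral_const_mul, integral_const_mul,
    integral_indicator_one (measurableSet_Ici.prod measurableSet_Ici),
    integral_indicator_one (measurableSet_Ici.prod MeasurableSet.univ),
    integral_indicator_one (MeasurableSet.univ.prod measurableSet_Ici),
    integral_const]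
  simp only [Measure.real]
  rw [map_fst_prod_apply, map_snd_prod_apply]
  simp

lemma cross_eq (μ : Measure (ℝ × ℝ)) [IsProbabilityMeasure μ]
    (hxy : Integrable (fun p : ℝ × ℝ => p.1 * p.2) μ) :
    Integrable (fun q : ℝ × ℝ => ∫ p : ℝ × ℝ, kk p.1 q.1 * kk p.2 q.2 ∂μ) volume ∧
      ∫ p : ℝ × ℝ, p.1 * p.2 ∂μ = ∫ q : ℝ × ℝ, ∫ p : ℝ × ℝ, kk p.1 q.1 * kk p.2 q.2 ∂μ := by
  have hΦm : Measurable (fun z : (ℝ × ℝ) × (ℝ × ℝ) => kk z.1.1 z.2.1 * kk z.1.2 z.2.2) := by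
    exact (kk_measurable.comp (measurable_fst.fst.prodMk measurable_snd.fst)).mul
      (kk_measurable.comp (measurable_fst.snd.prodMk measurable_snd.snd))
  have hvol : (volume : Measure (ℝ × ℝ)) = (volume : Measure ℝ).prod volume := Measure.volume_eq_prod ℝ ℝ
  have hsec : ∀ p : ℝ × ℝ, Integrable (fun q : ℝ × ℝ => kk p.1 q.1 * kk p.2 q.2) volume := by
    intro p
    rw [hvol]
    exact (kk_integrable p.1).mul_prod (kk_integrable p.2)
  have hinner : ∀ p : ℝ × ℝ, (∫ q : ℝ × ℝ, kk p.1 q.1 * kk p.2 q.2) = p.1 * p.2 := by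
    intro p
    rw [hvol, integral_prod_mul (kk p.1) (kk p.2), kk_integral, kk_integral]
  have hnorm : ∀ p : ℝ × ℝ, (∫ q : ℝ × ℝ, ‖kk p.1 q.1 * kk p.2 q.2‖) = |p.1| * |p.2| := by
    intro p
    have habs : ∀ q : ℝ × ℝ, ‖kk p.1 q.1 * kk p.2 q.2‖ = |kk p.1 q.1| * |kk p.2 q.2| := by
      intro q
      rw [Real.norm_eq_abs, abs_mul]
    simp only [habs]
    rw [hvol, integral_prod_mul (fun a => |kk p.1 a|) (fun a => |kk p.2 a|),
      kk_abs_integral, kk_abs_integral]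
  have hΦi : Integrable (fun z : (ℝ × ℝ) × (ℝ × ℝ) => kk z.1.1 z.2.1 * kk z.1.2 z.2.2)
      (μ.prod volume) := by
    rw [integrable_prod_iff hΦm.aestronglyMeasurable]
    refine ⟨ae_of_all _ fun p => hsec p, ?_⟩
    have heq : (fun p : ℝ × ℝ => ∫ q : ℝ × ℝ, ‖kk p.1 q.1 * kk p.2 q.2‖) =
        fun p : ℝ × ℝ => |p.1| * |p.2| := funext fun p => hnorm p
    rw [heq]
    have habs2 : Integrable (fun p : ℝ × ℝ => |p.1 * p.2|) μ := hxy.abs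
    simp only [abs_mul] at habs2
    exact habs2
  have heq1 : ∫ z : (ℝ × ℝ) × (ℝ × ℝ), kk z.1.1 z.2.1 * kk z.1.2 z.2.2 ∂(μ.prod volume)
      = ∫ p : ℝ × ℝ, p.1 * p.2 ∂μ := by
    rw [integral_prod _ hΦi]
    exact integral_congr_ae (ae_of_all _ fun p => hinner p)
  have hswap : ∫ p : ℝ × ℝ, ∫ q : ℝ × ℝ, kk p.1 q.1 * kk p.2 q.2 ∂volume ∂μ
      = ∫ q : ℝ × ℝ, ∫ p : ℝ × ℝ, kk p.1 q.1 * kk p.2 q.2 ∂μ ∂volume :=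
    integral_integral_swap hΦi
  have heq2 : ∫ z : (ℝ × ℝ) × (ℝ × ℝ), kk z.1.1 z.2.1 * kk z.1.2 z.2.2 ∂(μ.prod volume)
      = ∫ p : ℝ × ℝ, ∫ q : ℝ × ℝ, kk p.1 q.1 * kk p.2 q.2 ∂volume ∂μ :=
    integral_prod _ hΦi
  exact ⟨hΦi.integral_prod_right, by rw [← heq1, heq2, hswap]⟩

lemma coupling_prod_ge (μ : Measure (ℝ × ℝ)) [IsProbabilityMeasure μ] (s t : ℝ) :
    (μ.map Prod.fst (Set.Ici s)).toReal + (μ.map Prod.snd (Set.Ici t)).toReal - 1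
      ≤ (μ (Set.Ici s ×ˢ Set.Ici t)).toReal := by
  have hAB : (Set.Ici s ×ˢ (Set.univ : Set ℝ)) ∩ ((Set.univ : Set ℝ) ×ˢ Set.Ici t)
      = Set.Ici s ×ˢ Set.Ici t := by
    rw [Set.prod_inter_prod, Set.inter_univ, Set.univ_inter]
  have h := measure_union_add_inter (μ := μ) (s := Set.Ici s ×ˢ (Set.univ : Set ℝ))
    (t := (Set.univ : Set ℝ) ×ˢ Set.Ici t) (MeasurableSet.univ.prod measurableSet_Ici)
  rw [hAB] at h
  have hto := congrArg ENNReal.toReal h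
  rw [ENNReal.toReal_add (measure_ne_top _ _) (measure_ne_top _ _),
    ENNReal.toReal_add (measure_ne_top _ _) (measure_ne_top _ _)] at hto
  have hu1 : ((μ ((Set.Ici s ×ˢ (Set.univ : Set ℝ)) ∪ ((Set.univ : Set ℝ) ×ˢ Set.Ici t))).toReal) ≤ 1 := by
    have := measure_mono (μ := μ)
      (Set.subset_univ ((Set.Ici s ×ˢ (Set.univ : Set ℝ)) ∪ ((Set.univ : Set ℝ) ×ˢ Set.Ici t)))
    rw [measure_univ] at this
    exact ENNReal.toReal_mono ENNReal.one_ne_top this |>.trans_eq ENNReal.toReal_one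
  rw [← map_fst_prod_apply, ← map_snd_prod_apply]
  linarith

lemma antitone_prod_le (P0 P1 : Measure ℝ) [IsProbabilityMeasure P0] [IsProbabilityMeasure P1]
    (s t : ℝ) :
    (((volume.restrict (Set.Ioo (0:ℝ) 1)).map
        (fun u => (quantile P0 (1 - u), quantile P1 u))) (Set.Ici s ×ˢ Set.Ici t)).toReal
      ≤ max ((P0 (Set.Ici s)).toReal + (P1 (Set.Ici t)).toReal - 1) 0 := by
  have hΛ : AEMeasurable (fun u => (quantile P0 (1 - u), quantile P1 u))
      (volume.restrict (Set.Ioo (0:ℝ) 1)) :=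
    one_sub_aemeasurable_quantile.prodMk quantile_aemeasurable
  rw [Measure.map_apply_of_aemeasurable hΛ (measurableSet_Ici.prod measurableSet_Ici),
    Measure.restrict_apply' measurableSet_Ioo]
  have hsub : (fun u => (quantile P0 (1 - u), quantile P1 u)) ⁻¹' (Set.Ici s ×ˢ Set.Ici t)
      ∩ Set.Ioo 0 1 ⊆ Set.Icc ((P1 (Set.Iio t)).toReal) ((P0 (Set.Ici s)).toReal) := by
    rintro u ⟨hu, hu01⟩
    rw [Set.mem_preimage, Set.mem_prod] at hu
    refine ⟨toReal_Iio_le_of_le_quantile hu01 hu.2, ?_⟩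
    have h1u : 1 - u ∈ Set.Ioo (0:ℝ) 1 := ⟨by linarith [hu01.2], by linarith [hu01.1]⟩
    have h2 := toReal_Iio_le_of_le_quantile h1u hu.1
    have hsum := Iio_toReal_add_Ici_toReal (P := P0) s
    linarith
  have hle : (volume ((fun u => (quantile P0 (1 - u), quantile P1 u)) ⁻¹' (Set.Ici s ×ˢ Set.Ici t)
      ∩ Set.Ioo 0 1)).toReal
      ≤ (volume (Set.Icc ((P1 (Set.Iio t)).toReal) ((P0 (Set.Ici s)).toReal))).toReal :=
    ENNReal.toReal_mono (by rw [Real.volume_Icc]; exact ENNReal.ofReal_ne_top) (measure_mono hsub)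
  refine hle.trans ?_
  rw [Real.volume_Icc]
  have hsum1 := Iio_toReal_add_Ici_toReal (P := P1) t
  rcases le_or_gt ((P0 (Set.Ici s)).toReal - (P1 (Set.Iio t)).toReal) 0 with h | h
  · rw [ENNReal.ofReal_of_nonpos h]
    simpa using le_max_right _ (0:ℝ)
  · rw [ENNReal.toReal_ofReal h.le]
    exact le_trans (le_of_eq (by linarith)) (le_max_left _ _)

lemma integrable_fst_mul_snd (P0 P1 : Measure ℝ) [IsProbabilityMeasure P0] [IsProbabilityMeasure P1]
    (hm0 : Integrable (fun y : ℝ => y ^ 2) P0) (hm1 : Integrable (fun y : ℝ => y ^ 2) P1)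
    (μ : Measure (ℝ × ℝ)) [IsProbabilityMeasure μ]
    (h0 : μ.map Prod.fst = P0) (h1 : μ.map Prod.snd = P1) :
    Integrable (fun p : ℝ × ℝ => p.1 * p.2) μ := by
  have hsqm : AEStronglyMeasurable (fun y : ℝ => y ^ 2) (μ.map Prod.fst) :=
    (continuous_pow 2).aestronglyMeasurable
  have hsqm' : AEStronglyMeasurable (fun y : ℝ => y ^ 2) (μ.map Prod.snd) :=
    (continuous_pow 2).aestronglyMeasurable
  have hf : Integrable (fun p : ℝ × ℝ => p.1 ^ 2) μ := by
    have h := hm0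
    rw [← h0] at h
    have := (integrable_map_measure hsqm measurable_fst.aemeasurable).1 h
    simpa [Function.comp_def] using this
  have hg : Integrable (fun p : ℝ × ℝ => p.2 ^ 2) μ := by
    have h := hm1
    rw [← h1] at h
    have := (integrable_map_measure hsqm' measurable_snd.aemeasurable).1 h
    simpa [Function.comp_def] using this
  refine Integrable.mono' ((hf.add hg).div_const 2)
    ((measurable_fst.mul measurable_snd).aestronglyMeasurable) (ae_of_all _ fun p => ?_)
  rw [Real.norm_eq_abs, abs_mul]
  simp only [Pi.add_apply]
  nlinarith [sq_nonneg (|p.1| - |p.2|), sq_abs p.1, sq_abs p.2, abs_nonneg p.1, abs_nonneg p.2]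

end Main

/-- Lower Fréchet–Hoeffding bound on the cross moment; attained by the antitone coupling. -/
theorem cross_moment_lower_bound
    (P0 P1 : Measure ℝ) [IsProbabilityMeasure P0] [IsProbabilityMeasure P1]
    (hm0 : Integrable (fun y : ℝ => y ^ 2) P0) (hm1 : Integrable (fun y : ℝ => y ^ 2) P1)
    (J : Measure (ℝ × ℝ)) [IsProbabilityMeasure J]
    (h0 : J.map Prod.fst = P0) (h1 : J.map Prod.snd = P1) :
    ((∫ u in Ioo (0:ℝ) 1, quantile P0 (1 - u) * quantile P1 u) ≤ ∫ p : ℝ × ℝ, p.1 * p.2 ∂J) ∧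
    (J = (volume.restrict (Ioo (0:ℝ) 1)).map (fun u => (quantile P0 (1 - u), quantile P1 u)) →
      (∫ p : ℝ × ℝ, p.1 * p.2 ∂J) = ∫ u in Ioo (0:ℝ) 1, quantile P0 (1 - u) * quantile P1 u) := by
  classical
  set W : Measure (ℝ × ℝ) :=
    (volume.restrict (Ioo (0:ℝ) 1)).map (fun u => (quantile P0 (1 - u), quantile P1 u)) with hW
  have hΛ : AEMeasurable (fun u => (quantile P0 (1 - u), quantile P1 u))
      (volume.restrict (Ioo (0:ℝ) 1)) :=
    one_sub_aemeasurable_quantile.prodMk quantile_aemeasurable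
  haveI : IsProbabilityMeasure W := Measure.isProbabilityMeasure_map hΛ
  have hW0 : W.map Prod.fst = P0 := by
    rw [hW, AEMeasurable.map_map_of_aemeasurable measurable_fst.aemeasurable hΛ]
    exact map_quantile_one_sub
  have hW1 : W.map Prod.snd = P1 := by
    rw [hW, AEMeasurable.map_map_of_aemeasurable measurable_snd.aemeasurable hΛ]
    exact map_quantile
  have hmapint : ∫ p : ℝ × ℝ, p.1 * p.2 ∂W
      = ∫ u in Ioo (0:ℝ) 1, quantile P0 (1 - u) * quantile P1 u := by
    rw [hW]
    exact integral_map hΛ ((measurable_fst.mul measurable_snd).aestronglyMeasurable)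
  have hJxy := integrable_fst_mul_snd P0 P1 hm0 hm1 J h0 h1
  have hWxy := integrable_fst_mul_snd P0 P1 hm0 hm1 W hW0 hW1
  obtain ⟨hJint, hJeq⟩ := cross_eq J hJxy
  obtain ⟨hWint, hWeq⟩ := cross_eq W hWxy
  have hdiff : ∀ q : ℝ × ℝ, 0 ≤ (∫ p : ℝ × ℝ, kk p.1 q.1 * kk p.2 q.2 ∂J)
      - ∫ p : ℝ × ℝ, kk p.1 q.1 * kk p.2 q.2 ∂W := by
    intro q
    rw [g_formula J q.1 q.2, g_formula W q.1 q.2, h0, h1, hW0, hW1]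
    have h1' : (W (Set.Ici q.1 ×ˢ Set.Ici q.2)).toReal
        ≤ max ((P0 (Set.Ici q.1)).toReal + (P1 (Set.Ici q.2)).toReal - 1) 0 := by
      rw [hW]
      exact antitone_prod_le P0 P1 q.1 q.2
    have h2' := coupling_prod_ge J q.1 q.2
    rw [h0, h1] at h2'
    have h3' : max ((P0 (Set.Ici q.1)).toReal + (P1 (Set.Ici q.2)).toReal - 1) 0
        ≤ (J (Set.Ici q.1 ×ˢ Set.Ici q.2)).toReal := max_le h2' ENNReal.toReal_nonneg
    have := h1'.trans h3'
    linarith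
  constructor
  · rw [← hmapint, hJeq, hWeq]
    have hpos : 0 ≤ ∫ q : ℝ × ℝ, ((∫ p : ℝ × ℝ, kk p.1 q.1 * kk p.2 q.2 ∂J)
        - ∫ p : ℝ × ℝ, kk p.1 q.1 * kk p.2 q.2 ∂W) := integral_nonneg fun q => hdiff q
    rw [integral_sub hJint hWint] at hpos
    linarith
  · intro hJW
    rw [hJW, hmapint]
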